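/- Let Δx > 0 and let x_{i−1} = x_i − Δx, x_i, x_{i+1} = x_i + Δx be three consecutive grid points. Let f, g : ℝ → ℝ be four times continuously differentiable with |f''''(x)| ≤ M and |g''''(x)| ≤ M for all x ∈ [x_{i−1}, x_{i+1}]. Let x₀ ∈ (x_i, x_{i+1}], define ψ(x) = f(x) for x < x₀ and ψ(x) = g(x) for x ≥ x₀, set d⁺ = x_{i+1} − x₀, and for m = 0, 1, 2, 3 let ⟦ψ^(m)⟧ = g^(m)(x₀) − f^(m)(x₀). Then the jump-corrected three-point second difference satisfies | f''(x_i) − [ (ψ(x_{i+1}) − 2ψ(x_i) + ψ(x_{i−1}))/Δx² − (1/Δx²) Σ_{m=0}^{3} (d⁺)^m/m! · ⟦ψ^(m)⟧ ] | ≤ M·Δx². That is, the standard three-point second-difference stencil, corrected by the truncated generalized Taylor series of the jumps through third order, approximates the one-sided second derivative of f at the grid point x_i on the near side of the interface to second-order accuracy in Δx. -/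

import Mathlib

open Finset


lemma iterDW_eq {n : ℕ} {f : ℝ → ℝ} (hf : ContDiff ℝ (n : ℕ∞) f) {s : Set ℝ}
    (hs : UniqueDiffOn ℝ s) {x : ℝ} (hx : x ∈ s) {m : ℕ} (hm : m ≤ n) :
    iteratedDerivWithin m f s x = iteratedDeriv m f x := by
  rw [iteratedDerivWithin_eq_iteratedFDerivWithin, iteratedDeriv_eq_iteratedFDeriv]
  congr 1
  exact (((contDiff_iff_ftaylorSeries.mp hf).hasFTaylorSeriesUpToOn
    s).eq_iteratedFDerivWithin_of_uniqueDiffOn (by exact_mod_cast hm) hs hx).symm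

lemma taylor4 (f : ℝ → ℝ) (hf : ContDiff ℝ 4 f) (a x M : ℝ) (hax : a ≤ x)
    (hM : ∀ y ∈ Set.Icc a x, |iteratedDeriv 4 f y| ≤ M) :
    |f x - ∑ m ∈ Finset.range 4, (x - a) ^ m / (Nat.factorial m : ℝ) * iteratedDeriv m f a|
      ≤ M * (x - a) ^ 4 / 6 := by
  rcases eq_or_lt_of_le hax with rfl | hlt
  · simp [Finset.sum_range_succ]
  have hs := uniqueDiffOn_Icc hlt
  have hmem : a ∈ Set.Icc a x := Set.left_mem_Icc.mpr hax
  have hf' : ContDiffOn ℝ ((3 : ℕ) + 1) f (Set.Icc a x) := by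
    exact_mod_cast hf.contDiffOn
  have key := taylor_mean_remainder_bound (n := 3) hax hf' (Set.right_mem_Icc.mpr hax)
    (fun y hy => by
      rw [show (3 + 1) = 4 from rfl, iterDW_eq hf hs hy le_rfl]
      simpa using hM y hy)
  rw [taylor_within_apply] at key
  have hsum : (∑ k ∈ Finset.range 4, (((k.factorial : ℝ))⁻¹ * (x - a) ^ k) •
      iteratedDerivWithin k f (Set.Icc a x) a) =
      ∑ m ∈ Finset.range 4, (x - a) ^ m / (Nat.factorial m : ℝ) * iteratedDeriv m f a := by
    refine Finset.sum_congr rfl fun k hk => ?_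
    rw [iterDW_eq hf hs hmem (by have := Finset.mem_range.mp hk; omega : k ≤ 4)]
    simp only [smul_eq_mul]
    ring
  rw [hsum] at key
  simpa [Nat.factorial] using key

lemma taylor4_back (f : ℝ → ℝ) (hf : ContDiff ℝ 4 f) (a x M : ℝ) (hxa : x ≤ a)
    (hM : ∀ y ∈ Set.Icc x a, |iteratedDeriv 4 f y| ≤ M) :
    |f x - ∑ m ∈ Finset.range 4, (x - a) ^ m / (Nat.factorial m : ℝ) * iteratedDeriv m f a|
      ≤ M * (a - x) ^ 4 / 6 := by
  set F : ℝ → ℝ := fun y => f (2 * a - y) with hF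
  have hFc : ContDiff ℝ 4 F := hf.comp (contDiff_const.sub contDiff_id)
  have hFd : ∀ (m : ℕ) (y : ℝ), iteratedDeriv m F y = (-1 : ℝ) ^ m * iteratedDeriv m f (2 * a - y) := by
    intro m y
    have h1 : F = fun t => (fun z => f (2 * a + z)) (-t) := by
      funext t; simp [hF, sub_eq_add_neg]
    rw [h1, iteratedDeriv_comp_neg m (fun z => f (2 * a + z)) y,
      iteratedDeriv_comp_const_add m f (2 * a)]
    simp [smul_eq_mul, sub_eq_add_neg]
  have hax' : a ≤ 2 * a - x := by linarith
  have key := taylor4 F hFc a (2 * a - x) M hax'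
    (fun y hy => by
      rw [hFd 4 y]
      have : 2 * a - y ∈ Set.Icc x a := ⟨by linarith [hy.2], by linarith [hy.1]⟩
      simpa [abs_mul] using hM _ this)
  have e1 : F (2 * a - x) = f x := by simp [hF]
  have e2 : (∑ m ∈ Finset.range 4, (2 * a - x - a) ^ m / (Nat.factorial m : ℝ) *
      iteratedDeriv m F a) =
      ∑ m ∈ Finset.range 4, (x - a) ^ m / (Nat.factorial m : ℝ) * iteratedDeriv m f a := by
    refine Finset.sum_congr rfl fun m _ => ?_
    rw [hFd m a]
    have : (2 * a - x - a) ^ m * (-1 : ℝ) ^ m = (x - a) ^ m := by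
      rw [← mul_pow]; ring_nf
    have h2 : (2 * a - a) = a := by ring
    rw [h2]
    field_simp
    linear_combination (iteratedDeriv m f a) * this
  rw [e1, e2] at key
  calc _ ≤ M * (2 * a - x - a) ^ 4 / 6 := key
    _ = M * (a - x) ^ 4 / 6 := by ring_nf

set_option maxHeartbeats 1000000 in
/-- Jump-corrected three-point second difference across an interface at `x₀`
recovers the one-sided second derivative of the smooth piece `f` at the grid
point `x_i` to second order in `Δx`. -/
theorem corrected_second_difference_second_order
    (Δx : ℝ) (hΔx : 0 < Δx) (xi : ℝ) (M : ℝ)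
    (f g : ℝ → ℝ) (hf : ContDiff ℝ 4 f) (hg : ContDiff ℝ 4 g)
    (hfM : ∀ x ∈ Set.Icc (xi - Δx) (xi + Δx), |iteratedDeriv 4 f x| ≤ M)
    (hgM : ∀ x ∈ Set.Icc (xi - Δx) (xi + Δx), |iteratedDeriv 4 g x| ≤ M)
    (x₀ : ℝ) (hx₀ : x₀ ∈ Set.Ioc xi (xi + Δx))
    (ψ : ℝ → ℝ) (hψ : ∀ x, ψ x = if x < x₀ then f x else g x)
    (dp : ℝ) (hdp : dp = (xi + Δx) - x₀)
    (jump : ℕ → ℝ)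
    (hjump : ∀ m, jump m = iteratedDeriv m g x₀ - iteratedDeriv m f x₀) :
    |iteratedDeriv 2 f xi -
        ((ψ (xi + Δx) - 2 * ψ xi + ψ (xi - Δx)) / Δx ^ 2 -
          (1 / Δx ^ 2) * ∑ m ∈ Finset.range 4, dp ^ m / (Nat.factorial m : ℝ) * jump m)| ≤
      M * Δx ^ 2 := by
  obtain ⟨hx₀l, hx₀r⟩ := hx₀
  have hM0 : 0 ≤ M := le_trans (abs_nonneg _) (hfM xi ⟨by linarith, by linarith⟩)
  have hψp : ψ (xi + Δx) = g (xi + Δx) := by rw [hψ, if_neg (not_lt.mpr hx₀r)]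
  have hψi : ψ xi = f xi := by rw [hψ, if_pos hx₀l]
  have hψm : ψ (xi - Δx) = f (xi - Δx) := by rw [hψ, if_pos (by linarith)]
  -- derivatives of g - f
  have hgf : ContDiff ℝ 4 (g - f) := hg.sub hf
  have hsub : ∀ (m : ℕ), m ≤ 4 → ∀ y : ℝ,
      iteratedDeriv m (g - f) y = iteratedDeriv m g y - iteratedDeriv m f y := by
    intro m hm y
    rw [← iteratedDerivWithin_univ, ← iteratedDerivWithin_univ, ← iteratedDerivWithin_univ,
      iteratedDerivWithin_sub (Set.mem_univ y) uniqueDiffOn_univ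
        ((hg.of_le (by exact_mod_cast hm)).contDiffWithinAt) ((hf.of_le (by exact_mod_cast hm)).contDiffWithinAt)]
  -- Taylor remainders
  have hR1 := taylor4 f hf xi (xi + Δx) M (by linarith)
    (fun y hy => hfM y ⟨by linarith [hy.1], hy.2⟩)
  have hR2 := taylor4_back f hf xi (xi - Δx) M (by linarith)
    (fun y hy => hfM y ⟨hy.1, by linarith [hy.2]⟩)
  have hR3 := taylor4 (g - f) hgf x₀ (xi + Δx) (2 * M) (by linarith)
    (fun y hy => by
      rw [hsub 4 le_rfl y]
      have h1 := hfM y ⟨by linarith [hy.1], hy.2⟩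
      have h2 := hgM y ⟨by linarith [hy.1], hy.2⟩
      calc |iteratedDeriv 4 g y - iteratedDeriv 4 f y|
          ≤ |iteratedDeriv 4 g y| + |iteratedDeriv 4 f y| := abs_sub _ _
        _ ≤ 2 * M := by linarith)
  -- rewrite the jump sum
  have hjs : (∑ m ∈ Finset.range 4, dp ^ m / (Nat.factorial m : ℝ) * jump m) =
      ∑ m ∈ Finset.range 4, ((xi + Δx) - x₀) ^ m / (Nat.factorial m : ℝ) *
        iteratedDeriv m (g - f) x₀ := by
    refine Finset.sum_congr rfl fun m hm => ?_
    rw [hjump m, hdp, hsub m (by have := Finset.mem_range.mp hm; omega) x₀]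
  set r1 := f (xi + Δx) - ∑ m ∈ Finset.range 4,
      ((xi + Δx) - xi) ^ m / (Nat.factorial m : ℝ) * iteratedDeriv m f xi with hr1
  set r2 := f (xi - Δx) - ∑ m ∈ Finset.range 4,
      ((xi - Δx) - xi) ^ m / (Nat.factorial m : ℝ) * iteratedDeriv m f xi with hr2
  set r3 := (g - f) (xi + Δx) - ∑ m ∈ Finset.range 4,
      ((xi + Δx) - x₀) ^ m / (Nat.factorial m : ℝ) * iteratedDeriv m (g - f) x₀ with hr3
  have hΔ2 : (0:ℝ) < Δx ^ 2 := by positivity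
  have hne : Δx ≠ 0 := ne_of_gt hΔx
  set D1 := deriv f xi
  set D2 := iteratedDeriv 2 f xi
  set D3 := iteratedDeriv 3 f xi
  set E0 := g x₀ - f x₀
  set E1 := deriv (g - f) x₀
  set E2 := iteratedDeriv 2 (g - f) x₀
  set E3 := iteratedDeriv 3 (g - f) x₀
  set q := (xi + Δx) - x₀ with hq
  have e1 : f (xi + Δx) = r1 + (f xi + Δx * D1 + Δx ^ 2 / 2 * D2 + Δx ^ 3 / 6 * D3) := by
    rw [hr1]
    simp [Finset.sum_range_succ, Nat.factorial]
    all_goals ring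
  have e2 : f (xi - Δx) = r2 + (f xi - Δx * D1 + Δx ^ 2 / 2 * D2 - Δx ^ 3 / 6 * D3) := by
    rw [hr2]
    simp [Finset.sum_range_succ, Nat.factorial]
    all_goals ring
  have e3 : (g - f) (xi + Δx) = r3 + (E0 + q * E1 + q ^ 2 / 2 * E2 + q ^ 3 / 6 * E3) := by
    rw [hr3]
    simp [Finset.sum_range_succ, Nat.factorial]
    all_goals ring
  have e4 : (∑ m ∈ Finset.range 4, dp ^ m / (Nat.factorial m : ℝ) * jump m) =
      E0 + q * E1 + q ^ 2 / 2 * E2 + q ^ 3 / 6 * E3 := by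
    rw [hjs]
    simp [Finset.sum_range_succ, Nat.factorial]
    all_goals ring
  have hgval : g (xi + Δx) = (g - f) (xi + Δx) + f (xi + Δx) := by simp
  have key : iteratedDeriv 2 f xi -
      ((ψ (xi + Δx) - 2 * ψ xi + ψ (xi - Δx)) / Δx ^ 2 -
        (1 / Δx ^ 2) * ∑ m ∈ Finset.range 4, dp ^ m / (Nat.factorial m : ℝ) * jump m) =
      -((r1 + r2 + r3) / Δx ^ 2) := by
    rw [hψp, hψi, hψm, hgval, e1, e2, e3, e4]
    field_simp
    ring
  rw [key]
  have hbound : |r1 + r2 + r3| ≤ M * Δx ^ 4 / 6 + M * Δx ^ 4 / 6 + 2 * M * Δx ^ 4 / 6 := by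
    have hdp0 : (0:ℝ) ≤ (xi + Δx) - x₀ := by linarith
    have hdple : ((xi + Δx) - x₀) ^ 4 ≤ Δx ^ 4 :=
      pow_le_pow_left₀ hdp0 (by linarith) 4
    have h1 : |r1| ≤ M * Δx ^ 4 / 6 := by
      have h : (xi + Δx) - xi = Δx := by ring
      calc |r1| ≤ M * ((xi + Δx) - xi) ^ 4 / 6 := hR1
        _ = M * Δx ^ 4 / 6 := by rw [h]
    have h2 : |r2| ≤ M * Δx ^ 4 / 6 := by
      have h : xi - (xi - Δx) = Δx := by ring
      calc |r2| ≤ M * (xi - (xi - Δx)) ^ 4 / 6 := hR2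
        _ = M * Δx ^ 4 / 6 := by rw [h]
    have h3 : |r3| ≤ 2 * M * Δx ^ 4 / 6 := by
      calc |r3| ≤ 2 * M * ((xi + Δx) - x₀) ^ 4 / 6 := hR3
        _ ≤ 2 * M * Δx ^ 4 / 6 := by
            apply div_le_div_of_nonneg_right ?_ (by norm_num)
            · exact mul_le_mul_of_nonneg_left hdple (by linarith)
    calc |r1 + r2 + r3| ≤ |r1| + |r2| + |r3| := abs_add_three _ _ _
      _ ≤ _ := by linarith
  rw [abs_neg, abs_div, abs_of_pos hΔ2]
  rw [div_le_iff₀ hΔ2]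
  calc |r1 + r2 + r3| ≤ M * Δx ^ 4 / 6 + M * Δx ^ 4 / 6 + 2 * M * Δx ^ 4 / 6 := hbound
    _ ≤ M * Δx ^ 2 * Δx ^ 2 := by nlinarith [sq_nonneg Δx, pow_pos hΔx 4]
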